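/- arXiv:math/0504229 — 3 statements merged into one kernel-verified Lean document; each statement's English description precedes it below -/
import Mathlib

section
/- Suppose f¹,…,f^k, g¹,…,g^ℓ and f̂¹,…,f̂^k̂, ĝ¹,…,ĝ^ℓ̂ are two families of linearly independent vectors in a finite-dimensional complex vector space V satisfying Σᵢ fⁱ ⊗ conj(fⁱ) − Σⱼ gʲ ⊗ conj(gʲ) = Σᵢ f̂ⁱ ⊗ conj(f̂ⁱ) − Σⱼ ĝʲ ⊗ conj(ĝʲ) in V ⊗ conj(V). Then span{f¹,…,f^k, g¹,…,g^ℓ} = span{f̂¹,…,f̂^k̂, ĝ¹,…,ĝ^ℓ̂}. -/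
open Finset ComplexConjugate

private lemma dual_delta {V : Type*} [AddCommGroup V] [Module ℂ V]
    {ι : Type*} [DecidableEq ι] {v : ι → V} (hv : LinearIndependent ℂ v) (i₀ : ι) :
    ∃ ψ : Module.Dual ℂ V, ∀ j, ψ (v j) = if j = i₀ then 1 else 0 := by
  classical
  have hv' := (linearIndepOn_id_range_iff hv.injective).mpr hv
  let B := Module.Basis.extend hv'
  have hsub : Set.range v ⊆ hv'.extend (Set.subset_univ _) := hv'.subset_extend _
  refine ⟨B.coord ⟨v i₀, hsub (Set.mem_range_self i₀)⟩, fun j => ?_⟩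
  have : v j = B ⟨v j, hsub (Set.mem_range_self j)⟩ := by
    rw [Module.Basis.extend_apply_self]
  rw [this, Module.Basis.coord_apply, Module.Basis.repr_self, Finsupp.single_apply]
  have hinj := hv.injective
  by_cases h : j = i₀
  · subst h; simp
  · have : (⟨v i₀, hsub (Set.mem_range_self i₀)⟩ : hv'.extend (Set.subset_univ _)) ≠ ⟨v j, hsub (Set.mem_range_self j)⟩ := by
      intro hcon
      exact h (hinj (congrArg Subtype.val hcon).symm)
    rw [if_neg h, if_neg]
    exact fun hc => h (hinj (Subtype.mk_eq_mk.mp hc))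

private lemma half {V : Type*} [AddCommGroup V] [Module ℂ V] [FiniteDimensional ℂ V]
    {k ℓ k' ℓ' : ℕ} (f : Fin k → V) (g : Fin ℓ → V) (f' : Fin k' → V) (g' : Fin ℓ' → V)
    (hfg' : LinearIndependent ℂ (Sum.elim f' g'))
    (heq : ∀ φ ψ : Module.Dual ℂ V,
      ∑ i, φ (f i) * conj (ψ (f i)) - ∑ j, φ (g j) * conj (ψ (g j)) =
        ∑ i, φ (f' i) * conj (ψ (f' i)) - ∑ j, φ (g' j) * conj (ψ (g' j))) :
    Submodule.span ℂ (Set.range f' ∪ Set.range g') ≤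
      Submodule.span ℂ (Set.range f ∪ Set.range g) := by
  set W := Submodule.span ℂ (Set.range f ∪ Set.range g)
  have key : ∀ (φ : Module.Dual ℂ V), (∀ w ∈ W, φ w = 0) →
      (∀ i, φ (f' i) = 0) ∧ (∀ j, φ (g' j) = 0) := by
    intro φ hφ
    have hf0 : ∀ i, φ (f i) = 0 := fun i => hφ _ (Submodule.subset_span (Or.inl ⟨i, rfl⟩))
    have hg0 : ∀ j, φ (g j) = 0 := fun j => hφ _ (Submodule.subset_span (Or.inr ⟨j, rfl⟩))
    have main : ∀ ψ : Module.Dual ℂ V,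
        ∑ i, φ (f' i) * conj (ψ (f' i)) - ∑ j, φ (g' j) * conj (ψ (g' j)) = 0 := by
      intro ψ
      rw [← heq φ ψ]
      simp [hf0, hg0]
    constructor
    · intro i₀
      obtain ⟨ψ, hψ⟩ := dual_delta hfg' (Sum.inl i₀)
      have h1 := main ψ
      have hψf : ∀ i, ψ (f' i) = if i = i₀ then 1 else 0 := by
        intro i; simpa using hψ (Sum.inl i)
      have hψg : ∀ j, ψ (g' j) = 0 := by
        intro j; simpa using hψ (Sum.inr j)
      simp only [hψf, hψg, map_zero, mul_zero, Finset.sum_const_zero, sub_zero] at h1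
      simpa [apply_ite (conj : ℂ → ℂ)] using h1
    · intro j₀
      obtain ⟨ψ, hψ⟩ := dual_delta hfg' (Sum.inr j₀)
      have h1 := main ψ
      have hψf : ∀ i, ψ (f' i) = 0 := by
        intro i; simpa using hψ (Sum.inl i)
      have hψg : ∀ j, ψ (g' j) = if j = j₀ then 1 else 0 := by
        intro j; simpa using hψ (Sum.inr j)
      simp only [hψf, hψg, map_zero, mul_zero, Finset.sum_const_zero, zero_sub, neg_eq_zero] at h1
      simpa [apply_ite (conj : ℂ → ℂ)] using h1
  rw [Submodule.span_le]
  intro x hx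
  rw [← Subspace.dualAnnihilator_dualCoannihilator_eq (W := W),
    SetLike.mem_coe, Submodule.mem_dualCoannihilator]
  intro φ hφ
  rw [Submodule.mem_dualAnnihilator] at hφ
  obtain ⟨h1, h2⟩ := key φ hφ
  rcases hx with ⟨i, rfl⟩ | ⟨j, rfl⟩
  · exact h1 i
  · exact h2 j

theorem stmt_2 {V : Type*} [AddCommGroup V] [Module ℂ V] [FiniteDimensional ℂ V]
    {k ℓ k' ℓ' : ℕ} (f : Fin k → V) (g : Fin ℓ → V) (f' : Fin k' → V) (g' : Fin ℓ' → V)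
    (hfg : LinearIndependent ℂ (Sum.elim f g))
    (hfg' : LinearIndependent ℂ (Sum.elim f' g'))
    (heq : ∀ φ ψ : Module.Dual ℂ V,
      ∑ i, φ (f i) * conj (ψ (f i)) - ∑ j, φ (g j) * conj (ψ (g j)) =
        ∑ i, φ (f' i) * conj (ψ (f' i)) - ∑ j, φ (g' j) * conj (ψ (g' j))) :
    Submodule.span ℂ (Set.range f ∪ Set.range g) =
      Submodule.span ℂ (Set.range f' ∪ Set.range g') := by
  refine le_antisymm ?_ ?_
  · exact half f' g' f g hfg (fun φ ψ => (heq φ ψ).symm)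
  · exact half f g f' g' hfg' heq
end

section
/- The bihomogeneous polynomial P(z₀,z₁) = (|z₀|² − |z₁|²)² on ℂ² is not a quotient of squared norms: there do not exist nonempty finite families of homogeneous polynomials (s^γ), with not all s^γ identically zero, and (T^δ) on ℂ² such that P(z)·Σ_γ |s^γ(z)|² = Σ_δ |T^δ(z)|² for all z ∈ ℂ². -/
open Finset

section
open MvPolynomial Polynomial

lemma aux_eval_aeval (p : MvPolynomial (Fin 2) ℂ) (g : Fin 2 → Polynomial ℂ) (w : ℂ) :
    (MvPolynomial.aeval g p).eval w = MvPolynomial.eval (fun i => (g i).eval w) p := by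
  induction p using MvPolynomial.induction_on with
  | C a => simp
  | add p q hp hq => simp [hp, hq]
  | mul_X p i hp => simp [hp]

lemma vanish_of_vanish_on (p : MvPolynomial (Fin 2) ℂ) (g : Fin 2 → Polynomial ℂ)
    {S : Set ℂ} (hS : S.Infinite)
    (h : ∀ w ∈ S, MvPolynomial.eval (fun i => (g i).eval w) p = 0) (w : ℂ) :
    MvPolynomial.eval (fun i => (g i).eval w) p = 0 := by
  have hq : MvPolynomial.aeval g p = 0 := by
    apply Polynomial.eq_zero_of_infinite_isRoot
    apply hS.mono
    intro x hx
    simp only [Set.mem_setOf_eq, Polynomial.IsRoot, aux_eval_aeval, h x hx]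
  rw [← aux_eval_aeval, hq, Polynomial.eval_zero]

end

lemma circle_infinite : {w : ℂ | ‖w‖ = 1}.Infinite := by
  apply Set.infinite_of_injective_forall_mem
    (f := fun t : ℝ => (1 - t*Complex.I)/(1 + t*Complex.I))
  · intro a b hab
    have ha : (1 + (a:ℂ)*Complex.I) ≠ 0 := by
      intro h
      have := congrArg Complex.re h
      simp at this
    have hb : (1 + (b:ℂ)*Complex.I) ≠ 0 := by
      intro h
      have := congrArg Complex.re h
      simp at this
    field_simp at hab
    have hb' : (1 + Complex.I * (b:ℂ)) ≠ 0 := by rwa [mul_comm]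
    rw [eq_div_iff hb'] at hab
    have h2 : (a:ℂ) = b := by
      linear_combination (Complex.I/2) * hab + ((a:ℂ) - b) * Complex.I_sq
    exact_mod_cast h2
  · intro t
    show ‖_‖ = 1
    have hc : ((1:ℂ) - t*Complex.I) = starRingEnd ℂ (1 + t*Complex.I) := by
      simp [map_add, Complex.conj_ofReal]
      ring
    have hb : (1 + (t:ℂ)*Complex.I) ≠ 0 := by
      intro h
      have := congrArg Complex.re h
      simp at this
    rw [norm_div, hc, RCLike.norm_conj, div_self (norm_ne_zero_iff.mpr hb)]

lemma offcircle_infinite (c : ℝ) : {w : ℂ | ‖w‖ ≠ c}.Infinite := by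
  apply Set.infinite_of_injective_forall_mem
    (f := fun n : ℕ => ((|c| + 1 + n : ℝ) : ℂ))
  · intro a b hab
    have : (|c| + 1 + a : ℝ) = (|c| + 1 + b : ℝ) := by
      have := hab
      simp only at this
      exact_mod_cast this
    have : (a:ℝ) = b := by linarith
    exact_mod_cast this
  · intro n
    show ‖_‖ ≠ c
    rw [Complex.norm_real]
    have h1 : (0:ℝ) ≤ |c| + 1 + n := by positivity
    rw [Real.norm_eq_abs, abs_of_nonneg h1]
    have := abs_nonneg c
    have := le_abs_self c
    nlinarith [Nat.cast_nonneg (α := ℝ) n]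

theorem stmt_6 :
    ¬ ∃ (M M' : ℕ) (s : Fin M → MvPolynomial (Fin 2) ℂ)
        (T : Fin M' → MvPolynomial (Fin 2) ℂ),
      (∀ γ, ∃ e, (s γ).IsHomogeneous e) ∧
      (∃ γ, s γ ≠ 0) ∧
      (∀ δ, ∃ e, (T δ).IsHomogeneous e) ∧
      ∀ z : Fin 2 → ℂ,
        (‖z 0‖ ^ 2 - ‖z 1‖ ^ 2) ^ 2 * ∑ γ, ‖MvPolynomial.eval z (s γ)‖ ^ 2 =
          ∑ δ, ‖MvPolynomial.eval z (T δ)‖ ^ 2 := by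
  rintro ⟨M, M', s, T, hs_hom, ⟨γ₀, hγ₀⟩, hT_hom, hEq⟩
  -- Step A: each T δ vanishes wherever ‖z 0‖ = ‖z 1‖
  have hTzero : ∀ δ (z : Fin 2 → ℂ), ‖z 0‖ = ‖z 1‖ → MvPolynomial.eval z (T δ) = 0 := by
    intro δ z hz
    have h := hEq z
    rw [hz, sub_self] at h
    simp only [ne_eq, OfNat.ofNat_ne_zero, not_false_eq_true, zero_pow, zero_mul] at h
    have h0 := (Finset.sum_eq_zero_iff_of_nonneg (fun δ _ => by positivity)).mp h.symm δ (by simp)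
    have : ‖MvPolynomial.eval z (T δ)‖ = 0 := by
      nlinarith [norm_nonneg (MvPolynomial.eval z (T δ))]
    exact norm_eq_zero.mp this
  -- Step B: each T δ vanishes everywhere
  have hTall : ∀ δ (z : Fin 2 → ℂ), MvPolynomial.eval z (T δ) = 0 := by
    intro δ z
    by_cases h0 : z 0 = 0
    · have key := vanish_of_vanish_on (T δ)
        ![Polynomial.C (z 1) * Polynomial.X, Polynomial.C (z 1)] circle_infinite ?_ 0
      · have hz : (fun i => Polynomial.eval 0 (![Polynomial.C (z 1) * Polynomial.X, Polynomial.C (z 1)] i)) = z := by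
          funext i
          fin_cases i <;> simp [h0]
        rwa [hz] at key
      · intro w hw
        have hw' : ‖w‖ = 1 := hw
        apply hTzero
        simp [norm_mul, hw']
    · have key := vanish_of_vanish_on (T δ)
        ![Polynomial.C (z 0), Polynomial.C (z 0) * Polynomial.X] circle_infinite ?_ (z 1 / z 0)
      · have hz : (fun i => Polynomial.eval (z 1 / z 0) (![Polynomial.C (z 0), Polynomial.C (z 0) * Polynomial.X] i)) = z := by
          funext i
          fin_cases i <;> simp [mul_div_cancel₀ _ h0]
        rwa [hz] at key
      · intro w hw
        have hw' : ‖w‖ = 1 := hw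
        apply hTzero
        simp [norm_mul, hw']
  -- Step C: s γ₀ vanishes wherever ‖z 0‖ ≠ ‖z 1‖
  have hszero : ∀ (z : Fin 2 → ℂ), ‖z 0‖ ≠ ‖z 1‖ → MvPolynomial.eval z (s γ₀) = 0 := by
    intro z hz
    have h := hEq z
    have hr : ∑ δ, ‖MvPolynomial.eval z (T δ)‖ ^ 2 = 0 := by
      apply Finset.sum_eq_zero
      intro δ _
      rw [hTall δ z]
      simp
    rw [hr] at h
    have hfac : (‖z 0‖ ^ 2 - ‖z 1‖ ^ 2) ^ 2 ≠ 0 := by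
      have : ‖z 0‖ ^ 2 ≠ ‖z 1‖ ^ 2 := by
        intro hc
        exact hz (by nlinarith [norm_nonneg (z 0), norm_nonneg (z 1)])
      exact pow_ne_zero 2 (sub_ne_zero.mpr this)
    have hsum : ∑ γ, ‖MvPolynomial.eval z (s γ)‖ ^ 2 = 0 :=
      (mul_eq_zero.mp h).resolve_left hfac
    have h0 := (Finset.sum_eq_zero_iff_of_nonneg (fun γ _ => by positivity)).mp hsum γ₀ (by simp)
    have : ‖MvPolynomial.eval z (s γ₀)‖ = 0 := by
      nlinarith [norm_nonneg (MvPolynomial.eval z (s γ₀))]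
    exact norm_eq_zero.mp this
  -- Step D: s γ₀ vanishes everywhere, hence is zero
  apply hγ₀
  apply MvPolynomial.funext
  intro z
  rw [map_zero]
  have key := vanish_of_vanish_on (s γ₀) ![Polynomial.X, Polynomial.C (z 1)]
    (offcircle_infinite ‖z 1‖) ?_ (z 0)
  · have hz : (fun i => Polynomial.eval (z 0) (![Polynomial.X, Polynomial.C (z 1)] i)) = z := by
      funext i
      fin_cases i <;> simp
    rwa [hz] at key
  · intro w hw
    apply hszero
    simpa using hw
end

section
/- Let f : Ω → ℂ^k and g : Ω → ℂ^ℓ with P = ‖f‖² − ‖g‖² ≥ 0 on Ω. Then (‖f‖² + ‖g‖²)/P is uniformly bounded on Ω ∖ {P = 0} if and only if for every vector c ∈ ℂ^k and d ∈ ℂ^ℓ, the function |⟨f, c⟩ + ⟨g, d⟩|²/P is uniformly bounded on Ω ∖ {P = 0}. -/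
open Finset ComplexConjugate

theorem stmt_9 {n k ℓ : ℕ} (Ω : Set (Fin n → ℂ))
    (f : (Fin n → ℂ) → Fin k → ℂ) (g : (Fin n → ℂ) → Fin ℓ → ℂ)
    (P : (Fin n → ℂ) → ℝ)
    (hP : ∀ z, P z = ∑ i, ‖f z i‖ ^ 2 - ∑ j, ‖g z j‖ ^ 2)
    (hpos : ∀ z ∈ Ω, 0 ≤ P z) :
    (∃ C : ℝ, ∀ z ∈ Ω, P z ≠ 0 →
        (∑ i, ‖f z i‖ ^ 2 + ∑ j, ‖g z j‖ ^ 2) / P z ≤ C) ↔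
      (∀ (c : Fin k → ℂ) (d : Fin ℓ → ℂ), ∃ C : ℝ, ∀ z ∈ Ω, P z ≠ 0 →
        ‖∑ i, f z i * conj (c i) + ∑ j, g z j * conj (d j)‖ ^ 2 / P z ≤ C) := by
  constructor
  · rintro ⟨C, hC⟩ c d
    set K : ℝ := 2 * (∑ i, ‖c i‖ ^ 2 + ∑ j, ‖d j‖ ^ 2) with hK
    have hK0 : 0 ≤ K := by
      have h1 : (0:ℝ) ≤ ∑ i, ‖c i‖ ^ 2 := Finset.sum_nonneg fun i _ => sq_nonneg _
      have h2 : (0:ℝ) ≤ ∑ j, ‖d j‖ ^ 2 := Finset.sum_nonneg fun j _ => sq_nonneg _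
      positivity
    refine ⟨K * max C 0, fun z hz hPz => ?_⟩
    have hPpos : 0 < P z := (hpos z hz).lt_of_ne (Ne.symm hPz)
    have hA : ‖∑ i, f z i * conj (c i)‖ ^ 2
        ≤ (∑ i, ‖f z i‖ ^ 2) * ∑ i, ‖c i‖ ^ 2 := by
      calc ‖∑ i, f z i * conj (c i)‖ ^ 2
          ≤ (∑ i, ‖f z i‖ * ‖c i‖) ^ 2 := by
            apply pow_le_pow_left₀ (norm_nonneg _)
            refine (norm_sum_le _ _).trans (le_of_eq ?_)
            simp [norm_mul]
        _ ≤ (∑ i, ‖f z i‖ ^ 2) * ∑ i, ‖c i‖ ^ 2 :=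
            Finset.sum_mul_sq_le_sq_mul_sq _ _ _
    have hB : ‖∑ j, g z j * conj (d j)‖ ^ 2
        ≤ (∑ j, ‖g z j‖ ^ 2) * ∑ j, ‖d j‖ ^ 2 := by
      calc ‖∑ j, g z j * conj (d j)‖ ^ 2
          ≤ (∑ j, ‖g z j‖ * ‖d j‖) ^ 2 := by
            apply pow_le_pow_left₀ (norm_nonneg _)
            refine (norm_sum_le _ _).trans (le_of_eq ?_)
            simp [norm_mul]
        _ ≤ (∑ j, ‖g z j‖ ^ 2) * ∑ j, ‖d j‖ ^ 2 :=
            Finset.sum_mul_sq_le_sq_mul_sq _ _ _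
    have key : ‖∑ i, f z i * conj (c i) + ∑ j, g z j * conj (d j)‖ ^ 2
        ≤ K * (∑ i, ‖f z i‖ ^ 2 + ∑ j, ‖g z j‖ ^ 2) := by
      have htri := norm_add_le (∑ i, f z i * conj (c i)) (∑ j, g z j * conj (d j))
      have h1 : (0:ℝ) ≤ ∑ i, ‖f z i‖ ^ 2 := Finset.sum_nonneg fun i _ => sq_nonneg _
      have h2 : (0:ℝ) ≤ ∑ j, ‖g z j‖ ^ 2 := Finset.sum_nonneg fun j _ => sq_nonneg _
      have h3 : (0:ℝ) ≤ ∑ i, ‖c i‖ ^ 2 := Finset.sum_nonneg fun i _ => sq_nonneg _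
      have h4 : (0:ℝ) ≤ ∑ j, ‖d j‖ ^ 2 := Finset.sum_nonneg fun j _ => sq_nonneg _
      have hn1 := norm_nonneg (∑ i, f z i * conj (c i))
      have hn2 := norm_nonneg (∑ j, g z j * conj (d j))
      have hn := norm_nonneg (∑ i, f z i * conj (c i) + ∑ j, g z j * conj (d j))
      nlinarith [sq_nonneg (‖∑ i, f z i * conj (c i)‖ - ‖∑ j, g z j * conj (d j)‖),
        mul_nonneg h1 h4, mul_nonneg h2 h3]
    calc ‖∑ i, f z i * conj (c i) + ∑ j, g z j * conj (d j)‖ ^ 2 / P z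
        ≤ K * (∑ i, ‖f z i‖ ^ 2 + ∑ j, ‖g z j‖ ^ 2) / P z := by gcongr
      _ = K * ((∑ i, ‖f z i‖ ^ 2 + ∑ j, ‖g z j‖ ^ 2) / P z) := mul_div_assoc _ _ _
      _ ≤ K * max C 0 := by
          refine mul_le_mul_of_nonneg_left ?_ hK0
          exact le_trans (hC z hz hPz) (le_max_left _ _)
  · intro h
    choose Cf hCf using fun i => h (Pi.single i 1) 0
    choose Cg hCg using fun j => h 0 (Pi.single j 1)
    refine ⟨∑ i, Cf i + ∑ j, Cg j, fun z hz hPz => ?_⟩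
    have hPpos : 0 < P z := (hpos z hz).lt_of_ne (Ne.symm hPz)
    have hf : ∀ i, ‖f z i‖ ^ 2 / P z ≤ Cf i := by
      intro i
      have := hCf i z hz hPz
      simpa [Pi.single_apply, apply_ite (conj : ℂ → ℂ), mul_ite] using this
    have hg : ∀ j, ‖g z j‖ ^ 2 / P z ≤ Cg j := by
      intro j
      have := hCg j z hz hPz
      simpa [Pi.single_apply, apply_ite (conj : ℂ → ℂ), mul_ite] using this
    calc (∑ i, ‖f z i‖ ^ 2 + ∑ j, ‖g z j‖ ^ 2) / P z
        = ∑ i, ‖f z i‖ ^ 2 / P z + ∑ j, ‖g z j‖ ^ 2 / P z := by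
          rw [add_div, Finset.sum_div, Finset.sum_div]
      _ ≤ ∑ i, Cf i + ∑ j, Cg j :=
          add_le_add (Finset.sum_le_sum fun i _ => hf i)
            (Finset.sum_le_sum fun j _ => hg j)
end
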